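/- Let G be a countable discrete group admitting a Følner sequence {F_n}, let (X,d) be a compact metric space, and let X^G carry the shift action and the metric 𝒅 as in the context. Then overline{mdim}_M(X^G, G, 𝒅) ≤ overline{dim}_B(X,d) and underline{mdim}_M(X^G, G, 𝒅) ≤ underline{dim}_B(X,d), where the metric mean dimensions are computed with respect to {F_n}. -/

import Mathlib

open Filter Set Topology
open scoped ENNReal

namespace MeanDim11

/-- The shift action of `G` on `X^G`: `(σ^h x)_g = x_{gh}`. -/
def shift {G X : Type*} [Group G] (h : G) (x : G → X) : G → X := fun g => x (g * h)

/-- The metric `𝒅((x_g),(y_g)) = Σ_g α_g d(x_g, y_g)` on `X^G`. -/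
noncomputable def bigD {G X : Type*} [MetricSpace X] (α : G → ℝ) (x y : G → X) : ℝ :=
  ∑' g, α g * dist (x g) (y g)

/-- The dynamical (Bowen) metric `d_F(x,y) = max_{g ∈ F} d(gx, gy)`. -/
noncomputable def dynDist {G X : Type*} (T : G → X → X) (d : X → X → ℝ)
    (F : Finset G) (x y : X) : ℝ :=
  if h : F.Nonempty then F.sup' h (fun g => d (T g x) (T g y)) else 0

/-- `K` is an `(F,ε)`-spanning subset of `E`. -/
def IsSpanningSet {G X : Type*} (T : G → X → X) (d : X → X → ℝ)
    (F : Finset G) (ε : ℝ) (E : Set X) (K : Finset X) : Prop :=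
  ↑K ⊆ E ∧ ∀ x ∈ E, ∃ y ∈ K, dynDist T d F x y ≤ ε

/-- `r_F(d,ε,E)`: minimal cardinality of an `(F,ε)`-spanning subset of `E`. -/
noncomputable def spanNum {G X : Type*} (T : G → X → X) (d : X → X → ℝ)
    (F : Finset G) (ε : ℝ) (E : Set X) : ℕ :=
  sInf {n : ℕ | ∃ K : Finset X, IsSpanningSet T d F ε E K ∧ K.card = n}

/-- `{F n}` is a Følner sequence of nonempty finite subsets of `G`. -/
def IsFolner {G : Type*} [Group G] (Fs : ℕ → Finset G) : Prop :=
  letI := Classical.decEq G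
  (∀ n, (Fs n).Nonempty) ∧
    ∀ g : G, Tendsto
      (fun n => (((Fs n) \ (Fs n).image (fun h => g * h)).card : ℝ) / ((Fs n).card : ℝ))
      atTop (𝓝 0)

/-- Upper metric mean dimension (via spanning numbers), w.r.t. a Følner sequence. -/
noncomputable def mdimMUpper {G X : Type*} (T : G → X → X) (d : X → X → ℝ)
    (Fs : ℕ → Finset G) (E : Set X) : ℝ≥0∞ :=
  limsup (fun ε : ℝ =>
      (limsup (fun n =>
          ENNReal.ofReal (Real.log (spanNum T d (Fs n) ε E : ℝ) / ((Fs n).card : ℝ))) atTop)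
        / ENNReal.ofReal |Real.log ε|) (𝓝[>] (0 : ℝ))

/-- Lower metric mean dimension (via spanning numbers), w.r.t. a Følner sequence. -/
noncomputable def mdimMLower {G X : Type*} (T : G → X → X) (d : X → X → ℝ)
    (Fs : ℕ → Finset G) (E : Set X) : ℝ≥0∞ :=
  liminf (fun ε : ℝ =>
      (limsup (fun n =>
          ENNReal.ofReal (Real.log (spanNum T d (Fs n) ε E : ℝ) / ((Fs n).card : ℝ))) atTop)
        / ENNReal.ofReal |Real.log ε|) (𝓝[>] (0 : ℝ))

/-- `N(ε)`: maximal cardinality of an `ε`-separated subset of `X`. -/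
noncomputable def maxSep (X : Type*) [MetricSpace X] (ε : ℝ) : ℕ :=
  sSup {n : ℕ | ∃ Q : Finset X, (∀ p ∈ Q, ∀ q ∈ Q, p ≠ q → ε < dist p q) ∧ Q.card = n}

/-- Upper box (Minkowski) dimension of `(X,d)`. -/
noncomputable def boxUpper (X : Type*) [MetricSpace X] : ℝ≥0∞ :=
  limsup (fun ε : ℝ => ENNReal.ofReal (Real.log (maxSep X ε : ℝ) / |Real.log ε|))
    (𝓝[>] (0 : ℝ))

/-- Lower box (Minkowski) dimension of `(X,d)`. -/
noncomputable def boxLower (X : Type*) [MetricSpace X] : ℝ≥0∞ :=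
  liminf (fun ε : ℝ => ENNReal.ofReal (Real.log (maxSep X ε : ℝ) / |Real.log ε|))
    (𝓝[>] (0 : ℝ))

section Aux

open scoped Pointwise

variable {X : Type*} [MetricSpace X]

lemma sep_bddAbove [CompactSpace X] {ε : ℝ} (hε : 0 < ε) :
    BddAbove {n : ℕ | ∃ Q : Finset X,
      (∀ p ∈ Q, ∀ q ∈ Q, p ≠ q → ε < dist p q) ∧ Q.card = n} := by
  obtain ⟨t, -, htf, hcov⟩ :=
    finite_cover_balls_of_compact (isCompact_univ (X := X)) (half_pos hε)
  have hch : ∀ q : X, ∃ z ∈ t, dist q z < ε / 2 := by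
    intro q
    have := hcov (mem_univ q)
    simpa [Metric.mem_ball] using this
  choose f hf₁ hf₂ using hch
  classical
  refine ⟨htf.toFinset.card, ?_⟩
  rintro n ⟨Q, hQ, rfl⟩
  refine Finset.card_le_card_of_injOn f (fun q _ => htf.mem_toFinset.mpr (hf₁ q)) ?_
  intro p hp q hq hpq
  by_contra hne
  have h1 := hQ p (by simpa using hp) q (by simpa using hq) hne
  have h3 : dist (f p) q < ε / 2 := by
    rw [hpq, dist_comm]; exact hf₂ q
  have h4 := hf₂ p
  have h5 := dist_triangle p (f p) q
  linarith

lemma one_le_maxSep [CompactSpace X] [Nonempty X] {ε : ℝ} (hε : 0 < ε) :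
    1 ≤ maxSep X ε := by
  have h1 : 1 ∈ {n : ℕ | ∃ Q : Finset X,
      (∀ p ∈ Q, ∀ q ∈ Q, p ≠ q → ε < dist p q) ∧ Q.card = n} :=
    ⟨{Classical.arbitrary X}, by simp, Finset.card_singleton _⟩
  exact le_csSup (sep_bddAbove hε) h1

lemma exists_maxSep_net [CompactSpace X] [Nonempty X] {ε : ℝ} (hε : 0 < ε) :
    ∃ Q : Finset X, Q.card = maxSep X ε ∧ ∀ x : X, ∃ q ∈ Q, dist x q ≤ ε := by
  classical
  have hne : Set.Nonempty {n : ℕ | ∃ Q : Finset X,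
      (∀ p ∈ Q, ∀ q ∈ Q, p ≠ q → ε < dist p q) ∧ Q.card = n} :=
    ⟨0, ∅, by simp, rfl⟩
  obtain ⟨Q, hQ, hcard⟩ := Nat.sSup_mem hne (sep_bddAbove hε)
  refine ⟨Q, hcard, ?_⟩
  intro x
  by_contra hx
  push_neg at hx
  have hx' : ∀ q ∈ Q, ε < dist x q := hx
  have hxQ : x ∉ Q := by
    intro h
    have := hx' x h
    simp at this
    linarith
  have hsep : ∀ p ∈ insert x Q, ∀ q ∈ insert x Q, p ≠ q → ε < dist p q := by
    intro p hp q hq hpq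
    rcases Finset.mem_insert.mp hp with rfl | hp' <;>
      rcases Finset.mem_insert.mp hq with rfl | hq'
    · exact absurd rfl hpq
    · exact hx' q hq'
    · rw [dist_comm]; exact hx' p hp'
    · exact hQ p hp' q hq' hpq
  have hmem : Q.card + 1 ∈ {n : ℕ | ∃ Q : Finset X,
      (∀ p ∈ Q, ∀ q ∈ Q, p ≠ q → ε < dist p q) ∧ Q.card = n} :=
    ⟨insert x Q, hsep, by rw [Finset.card_insert_of_notMem hxQ]⟩
  have hle := le_csSup (sep_bddAbove hε) hmem
  have h6 : Q.card = maxSep X ε := hcard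
  rw [maxSep] at h6
  omega

lemma exists_spanning_pow {G : Type*} [Group G] [CompactSpace X] [Nonempty X]
    (α : G → ℝ) (hαpos : ∀ g, 0 < α g) (hsum : Summable α)
    {C : ℝ} (hC0 : 0 ≤ C) (hC : ∀ x y : X, dist x y ≤ C)
    {ε ε' : ℝ} (hε' : 0 < ε') (E F A : Finset G) (hF : F.Nonempty)
    (hA : ∀ g ∈ E, ∀ h ∈ F, g * h ∈ A)
    (htail : (∑' g : ↑((E : Set G)ᶜ), α ↑g) * C ≤ ε / 2)
    (hhead : (∑' g, α g) * ε' ≤ ε / 2) :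
    ∃ K : Finset (G → X), IsSpanningSet shift (bigD α) F ε (Set.univ : Set (G → X)) K ∧
      K.card ≤ (maxSep X ε') ^ A.card := by
  classical
  obtain ⟨Q, hQcard, hQnet⟩ := exists_maxSep_net (X := X) hε'
  set x₀ : X := Classical.arbitrary X with hx₀
  set ext : ({g // g ∈ A} → X) → (G → X) :=
    fun f g => if h : g ∈ A then f ⟨g, h⟩ else x₀ with hext
  set K : Finset (G → X) := (Fintype.piFinset (fun _ : {g // g ∈ A} => Q)).image ext with hK
  refine ⟨K, ⟨subset_univ _, ?_⟩, ?_⟩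
  · intro x _
    choose q hq hqd using fun a : {g // g ∈ A} => hQnet (x a)
    refine ⟨ext q, Finset.mem_image_of_mem _ (Fintype.mem_piFinset.mpr hq), ?_⟩
    rw [dynDist, dif_pos hF]
    refine Finset.sup'_le _ _ (fun h hh => ?_)
    have hb : ∀ g : G, α g * dist (shift h x g) (shift h (ext q) g) ≤
        α g * (if g ∈ E then ε' else C) := by
      intro g
      by_cases hg : g ∈ E
      · have hgA : g * h ∈ A := hA g hg h hh
        simp only [shift, hg, if_pos]
        have hrw : ext q (g * h) = q ⟨g * h, hgA⟩ := dif_pos hgA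
        rw [hrw]
        exact mul_le_mul_of_nonneg_left (hqd ⟨g * h, hgA⟩) (hαpos g).le
      · simp only [shift, hg, if_neg, not_false_iff]
        exact mul_le_mul_of_nonneg_left (hC _ _) (hαpos g).le
    have hsummL : Summable (fun g => α g * dist (shift h x g) (shift h (ext q) g)) :=
      Summable.of_nonneg_of_le (fun g => mul_nonneg (hαpos g).le dist_nonneg)
        (fun g => mul_le_mul_of_nonneg_left (hC _ _) (hαpos g).le) (hsum.mul_right C)
    have hsummB : Summable (fun g => α g * (if g ∈ E then ε' else C)) :=
      Summable.of_nonneg_of_le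
        (fun g => mul_nonneg (hαpos g).le (by split <;> [exact hε'.le; exact hC0]))
        (fun g => mul_le_mul_of_nonneg_left
          (by split <;> [exact le_max_left _ _; exact le_max_right _ _]) (hαpos g).le)
        (hsum.mul_right (max ε' C))
    calc bigD α (shift h x) (shift h (ext q))
        ≤ ∑' g, α g * (if g ∈ E then ε' else C) := Summable.tsum_le_tsum hb hsummL hsummB
      _ = ∑ g ∈ E, α g * (if g ∈ E then ε' else C)
          + ∑' g : ↑((E : Set G)ᶜ), α ↑g * (if (↑g : G) ∈ E then ε' else C) :=
          (Summable.sum_add_tsum_compl hsummB).symm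
      _ ≤ ε / 2 + ε / 2 := by
          gcongr
          · have h1 : ∑ g ∈ E, α g * (if g ∈ E then ε' else C) = (∑ g ∈ E, α g) * ε' := by
              rw [Finset.sum_mul]
              exact Finset.sum_congr rfl (fun g hg => by rw [if_pos hg])
            rw [h1]
            calc (∑ g ∈ E, α g) * ε' ≤ (∑' g, α g) * ε' := by
                  gcongr
                  exact Summable.sum_le_tsum E (fun g _ => (hαpos g).le) hsum
              _ ≤ ε / 2 := hhead
          · have h2 : ∑' g : ↑((E : Set G)ᶜ), α ↑g * (if (↑g : G) ∈ E then ε' else C)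
                = (∑' g : ↑((E : Set G)ᶜ), α ↑g) * C := by
              rw [← tsum_mul_right]
              refine tsum_congr (fun g => ?_)
              have hg : (↑g : G) ∉ E := g.2
              rw [if_neg hg]
            rw [h2]
            exact htail
      _ = ε := add_halves ε
  · calc K.card ≤ (Fintype.piFinset (fun _ : {g // g ∈ A} => Q)).card :=
        Finset.card_image_le
    _ = ∏ _a : {g // g ∈ A}, Q.card := Fintype.card_piFinset _
    _ = Q.card ^ (Fintype.card {g // g ∈ A}) := by
        rw [Finset.prod_const, Finset.card_univ]
    _ = (maxSep X ε') ^ A.card := by rw [hQcard, Fintype.card_coe]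

lemma one_le_spanNum {Y G : Type*} [Nonempty Y] (T : G → Y → Y) (d : Y → Y → ℝ)
    (F : Finset G) (ε : ℝ)
    (hne : ∃ K : Finset Y, IsSpanningSet T d F ε (Set.univ : Set Y) K) :
    1 ≤ spanNum T d F ε (Set.univ : Set Y) := by
  obtain ⟨K₀, hK₀⟩ := hne
  have hS : {n : ℕ | ∃ K : Finset Y,
      IsSpanningSet T d F ε (Set.univ : Set Y) K ∧ K.card = n}.Nonempty :=
    ⟨K₀.card, K₀, hK₀, rfl⟩
  obtain ⟨K, hK, hcard⟩ := Nat.sInf_mem hS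
  obtain ⟨y, hy, -⟩ := hK.2 (Classical.arbitrary Y) (mem_univ _)
  calc 1 ≤ K.card := Finset.card_pos.mpr ⟨y, hy⟩
    _ = spanNum T d F ε (Set.univ : Set Y) := hcard

lemma folner_eventually {G : Type*} [Group G] {Fs : ℕ → Finset G} (hFol : IsFolner Fs)
    (E : Finset G) (hE : (1 : G) ∈ E) {δ : ℝ} (hδ : 0 < δ) :
    ∀ᶠ n in atTop, ∃ A : Finset G,
      (∀ g ∈ E, ∀ h ∈ Fs n, g * h ∈ A) ∧ ((A.card : ℝ) ≤ (1 + δ) * ((Fs n).card : ℝ)) := by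
  letI := Classical.decEq G
  obtain ⟨hne, hF⟩ := hFol
  have hsum : Tendsto (fun n => ∑ g ∈ E,
      (((Fs n) \ (Fs n).image (fun h => g * h)).card : ℝ) / ((Fs n).card : ℝ))
      atTop (𝓝 0) := by
    have h := tendsto_finset_sum E (fun g (_ : g ∈ E) => hF g)
    simpa using h
  have hev : ∀ᶠ n in atTop, ∑ g ∈ E,
      (((Fs n) \ (Fs n).image (fun h => g * h)).card : ℝ) / ((Fs n).card : ℝ) < δ :=
    (tendsto_order.1 hsum).2 δ hδ
  filter_upwards [hev] with n hn
  refine ⟨E * Fs n, fun g hg h hh => Finset.mul_mem_mul hg hh, ?_⟩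
  have hsub : E * Fs n ⊆ (Fs n) ∪ E.biUnion (fun g => (Fs n).image (fun h => g * h) \ Fs n) := by
    intro a ha
    rw [Finset.mem_mul] at ha
    obtain ⟨g, hg, h, hh, rfl⟩ := ha
    by_cases hmem : g * h ∈ Fs n
    · exact Finset.mem_union_left _ hmem
    · exact Finset.mem_union_right _ (Finset.mem_biUnion.mpr
        ⟨g, hg, Finset.mem_sdiff.mpr ⟨Finset.mem_image_of_mem _ hh, hmem⟩⟩)
  have h1 : (E * Fs n).card ≤ (Fs n).card
      + ∑ g ∈ E, ((Fs n).image (fun h => g * h) \ Fs n).card := by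
    calc (E * Fs n).card ≤ ((Fs n) ∪ E.biUnion (fun g => (Fs n).image (fun h => g * h) \ Fs n)).card :=
        Finset.card_le_card hsub
      _ ≤ (Fs n).card + (E.biUnion (fun g => (Fs n).image (fun h => g * h) \ Fs n)).card :=
        Finset.card_union_le _ _
      _ ≤ (Fs n).card + ∑ g ∈ E, ((Fs n).image (fun h => g * h) \ Fs n).card := by
        gcongr
        exact Finset.card_biUnion_le
  have h2 : ∀ g : G, ((Fs n).image (fun h => g * h) \ Fs n).card
      = ((Fs n) \ (Fs n).image (fun h => g * h)).card := by
    intro g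
    have hcardim : ((Fs n).image (fun h => g * h)).card = (Fs n).card :=
      Finset.card_image_of_injective _ (mul_right_injective g)
    have e1 := Finset.card_sdiff_add_card_inter ((Fs n).image (fun h => g * h)) (Fs n)
    have e2 := Finset.card_sdiff_add_card_inter (Fs n) ((Fs n).image (fun h => g * h))
    rw [Finset.inter_comm] at e1
    omega
  have hFpos : (0 : ℝ) < ((Fs n).card : ℝ) := by exact_mod_cast (hne n).card_pos
  have h3 : (∑ g ∈ E, (((Fs n) \ (Fs n).image (fun h => g * h)).card : ℝ)) < δ * ((Fs n).card : ℝ) := by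
    rw [← Finset.sum_div] at hn
    exact (div_lt_iff₀ hFpos).mp hn
  have h4 : ((E * Fs n).card : ℝ) ≤ ((Fs n).card : ℝ)
      + ∑ g ∈ E, (((Fs n) \ (Fs n).image (fun h => g * h)).card : ℝ) := by
    have := h1
    simp only [h2] at this
    push_cast
    exact_mod_cast this
  linarith

lemma limsup_span_le {G : Type*} [Group G] [CompactSpace X] [Nonempty X]
    (α : G → ℝ) (hαpos : ∀ g, 0 < α g) (hα1 : α (1 : G) = 1) (hsum : Summable α)
    {Fs : ℕ → Finset G} (hFol : IsFolner Fs) {ε : ℝ} (hε : 0 < ε) :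
    limsup (fun n => ENNReal.ofReal
        (Real.log (spanNum shift (bigD α) (Fs n) ε (Set.univ : Set (G → X)) : ℝ)
          / ((Fs n).card : ℝ))) atTop
      ≤ ENNReal.ofReal (Real.log (maxSep X (ε / (2 * ∑' g, α g)) : ℝ)) := by
  classical
  set S := ∑' g, α g with hSdef
  have hS1 : (1 : ℝ) ≤ S := by
    have h := Summable.sum_le_tsum ({1} : Finset G) (fun g _ => (hαpos g).le) hsum
    rwa [Finset.sum_singleton, hα1] at h
  have hSpos : (0 : ℝ) < S := lt_of_lt_of_le one_pos hS1
  set ε' := ε / (2 * S) with hε'def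
  have hε' : 0 < ε' := div_pos hε (by linarith)
  obtain ⟨C₀, hC₀⟩ := Metric.isBounded_iff.mp (isCompact_univ (X := X)).isBounded
  set C := max C₀ 0 with hCdef
  have hC0 : (0 : ℝ) ≤ C := le_max_right _ _
  have hC : ∀ x y : X, dist x y ≤ C :=
    fun x y => (hC₀ (mem_univ x) (mem_univ y)).trans (le_max_left _ _)
  have htt := tendsto_tsum_compl_atTop_zero (f := α)
  have httev : ∀ᶠ s : Finset G in atTop, (∑' g : {x // x ∉ s}, α ↑g) < ε / (2 * (C + 1)) :=
    (tendsto_order.1 htt).2 _ (by positivity)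
  obtain ⟨E₀, hE₀⟩ := eventually_atTop.mp httev
  set E := insert (1 : G) E₀ with hEdef
  have htail0 : (∑' g : {x // x ∉ E}, α ↑g) < ε / (2 * (C + 1)) :=
    hE₀ E (Finset.subset_insert _ _)
  have htail : (∑' g : ↑((E : Set G)ᶜ), α ↑g) * C ≤ ε / 2 := by
    have heq : (∑' g : ↑((E : Set G)ᶜ), α ↑g) = ∑' g : {x // x ∉ E}, α ↑g := rfl
    rw [heq]
    have hnn : (0 : ℝ) ≤ ∑' g : {x // x ∉ E}, α ↑g :=
      tsum_nonneg (fun g => (hαpos _).le)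
    calc (∑' g : {x // x ∉ E}, α ↑g) * C ≤ (ε / (2 * (C + 1))) * C := by
          apply mul_le_mul_of_nonneg_right htail0.le hC0
      _ ≤ ε / 2 := by
          rw [div_mul_eq_mul_div, div_le_div_iff₀ (by positivity) (by norm_num)]
          nlinarith
  have hhead : S * ε' ≤ ε / 2 := by
    have hSne : S ≠ 0 := hSpos.ne'
    have heq2 : S * ε' = ε / 2 := by
      rw [hε'def]
      field_simp
    linarith
  set N := maxSep X ε' with hNdef
  have hN1 : 1 ≤ N := one_le_maxSep hε'
  have hlogN : 0 ≤ Real.log (N : ℝ) := Real.log_nonneg (by exact_mod_cast hN1)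
  have key : ∀ δ : ℝ, 0 < δ →
      limsup (fun n => ENNReal.ofReal
        (Real.log (spanNum shift (bigD α) (Fs n) ε (Set.univ : Set (G → X)) : ℝ)
          / ((Fs n).card : ℝ))) atTop
      ≤ ENNReal.ofReal ((1 + δ) * Real.log (N : ℝ)) := by
    intro δ hδ
    refine limsup_le_of_le (by isBoundedDefault) ?_
    filter_upwards [folner_eventually hFol E (Finset.mem_insert_self _ _) hδ] with n hn
    obtain ⟨A, hA, hAcard⟩ := hn
    obtain ⟨K, hK, hKcard⟩ := exists_spanning_pow α hαpos hsum hC0 hC hε'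
      E (Fs n) A (hFol.1 n) hA htail hhead
    have hspan_le : spanNum shift (bigD α) (Fs n) ε (Set.univ : Set (G → X)) ≤ N ^ A.card :=
      le_trans (Nat.sInf_le ⟨K, hK, rfl⟩) hKcard
    have h1span : 1 ≤ spanNum shift (bigD α) (Fs n) ε (Set.univ : Set (G → X)) :=
      one_le_spanNum _ _ _ _ ⟨K, hK⟩
    apply ENNReal.ofReal_le_ofReal
    have hFcard : (0 : ℝ) < ((Fs n).card : ℝ) := by exact_mod_cast (hFol.1 n).card_pos
    have hlog : Real.log (spanNum shift (bigD α) (Fs n) ε (Set.univ : Set (G → X)) : ℝ)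
        ≤ (A.card : ℝ) * Real.log (N : ℝ) := by
      calc Real.log (spanNum shift (bigD α) (Fs n) ε (Set.univ : Set (G → X)) : ℝ)
          ≤ Real.log ((N : ℝ) ^ A.card) := by
            apply Real.log_le_log (by exact_mod_cast h1span)
            exact_mod_cast hspan_le
        _ = (A.card : ℝ) * Real.log (N : ℝ) := Real.log_pow _ _
    calc Real.log (spanNum shift (bigD α) (Fs n) ε (Set.univ : Set (G → X)) : ℝ)
          / ((Fs n).card : ℝ)
        ≤ ((A.card : ℝ) * Real.log (N : ℝ)) / ((Fs n).card : ℝ) := by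
          gcongr
      _ ≤ (1 + δ) * Real.log (N : ℝ) := by
          rw [div_le_iff₀ hFcard]
          nlinarith
  by_contra hcon
  push_neg at hcon
  have hφ : Tendsto (fun δ : ℝ => ENNReal.ofReal ((1 + δ) * Real.log (N : ℝ)))
      (𝓝[>] (0 : ℝ)) (𝓝 (ENNReal.ofReal (Real.log (N : ℝ)))) := by
    have hcont : Continuous (fun δ : ℝ => (1 + δ) * Real.log (N : ℝ)) := by continuity
    have hr : Tendsto (fun δ : ℝ => (1 + δ) * Real.log (N : ℝ)) (𝓝 (0 : ℝ))
        (𝓝 (Real.log (N : ℝ))) := by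
      have h0 := hcont.tendsto (0 : ℝ)
      norm_num at h0
      exact h0
    exact (ENNReal.continuous_ofReal.tendsto _).comp (hr.mono_left nhdsWithin_le_nhds)
  have hlt := hφ.eventually_lt_const hcon
  obtain ⟨δ, hδlt, hδpos⟩ := (hlt.and eventually_mem_nhdsWithin).exists
  exact absurd (key δ hδpos) (not_le.mpr hδlt)

lemma map_mul_nhdsWithin {c : ℝ} (hc : 0 < c) :
    Filter.map (fun ε : ℝ => c * ε) (𝓝[>] (0 : ℝ)) = 𝓝[>] (0 : ℝ) := by
  have key : ∀ {a : ℝ}, 0 < a →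
      Filter.map (fun ε : ℝ => a * ε) (𝓝[>] (0 : ℝ)) ≤ 𝓝[>] (0 : ℝ) := by
    intro a ha
    have h1 : Tendsto (fun ε : ℝ => a * ε) (𝓝[>] (0 : ℝ)) (𝓝 0) := by
      have h2 : Tendsto (fun ε : ℝ => a * ε) (𝓝 (0 : ℝ)) (𝓝 (a * 0)) :=
        (continuous_const.mul continuous_id).tendsto (0 : ℝ)
      rw [mul_zero] at h2
      exact h2.mono_left nhdsWithin_le_nhds
    exact tendsto_nhdsWithin_iff.mpr
      ⟨h1, eventually_mem_nhdsWithin.mono (fun x hx => mul_pos ha hx)⟩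
  refine le_antisymm (key hc) ?_
  have h2 := key (inv_pos.mpr hc)
  have h3 : Filter.map (fun ε : ℝ => c * ε) (Filter.map (fun ε : ℝ => c⁻¹ * ε) (𝓝[>] (0 : ℝ)))
      = 𝓝[>] (0 : ℝ) := by
    rw [Filter.map_map]
    have : ((fun ε : ℝ => c * ε) ∘ (fun ε : ℝ => c⁻¹ * ε)) = id := by
      funext x
      simp [Function.comp, ← mul_assoc, mul_inv_cancel₀ hc.ne']
    rw [this, Filter.map_id]
  calc 𝓝[>] (0 : ℝ)
      = Filter.map (fun ε : ℝ => c * ε) (Filter.map (fun ε : ℝ => c⁻¹ * ε) (𝓝[>] (0 : ℝ))) :=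
        h3.symm
    _ ≤ Filter.map (fun ε : ℝ => c * ε) (𝓝[>] (0 : ℝ)) := Filter.map_mono h2

lemma scaled_le_box [CompactSpace X] [Nonempty X] {c : ℝ} (hc0 : 0 < c) (hc1 : c < 1) :
    limsup (fun ε : ℝ => ENNReal.ofReal (Real.log (maxSep X (c * ε) : ℝ))
        / ENNReal.ofReal |Real.log ε|) (𝓝[>] (0 : ℝ)) ≤ boxUpper X ∧
    liminf (fun ε : ℝ => ENNReal.ofReal (Real.log (maxSep X (c * ε) : ℝ))
        / ENNReal.ofReal |Real.log ε|) (𝓝[>] (0 : ℝ)) ≤ boxLower X := by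
  set u : ℝ → ℝ≥0∞ :=
    fun ε => ENNReal.ofReal (Real.log (maxSep X (c * ε) : ℝ) / |Real.log (c * ε)|) with hu
  set v : ℝ → ℝ≥0∞ := fun ε => ENNReal.ofReal (|Real.log (c * ε)| / |Real.log ε|) with hv
  have habs : Tendsto (fun ε : ℝ => |Real.log ε|) (𝓝[>] (0 : ℝ)) atTop :=
    tendsto_abs_atBot_atTop.comp Real.tendsto_log_nhdsGT_zero
  have hrtend : Tendsto (fun ε : ℝ => |Real.log (c * ε)| / |Real.log ε|)
      (𝓝[>] (0 : ℝ)) (𝓝 1) := by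
    have hev : ∀ᶠ ε : ℝ in 𝓝[>] (0 : ℝ),
        |Real.log c| / |Real.log ε| + 1 = |Real.log (c * ε)| / |Real.log ε| := by
      filter_upwards [Ioo_mem_nhdsGT_of_mem
        (Set.left_mem_Ico.mpr (zero_lt_one (α := ℝ)))] with ε hε
      obtain ⟨hε0, hε1⟩ := hε
      have hlogε : Real.log ε < 0 := Real.log_neg hε0 hε1
      have hlogc : Real.log c < 0 := Real.log_neg hc0 hc1
      have hlm : Real.log (c * ε) = Real.log c + Real.log ε := Real.log_mul hc0.ne' hε0.ne'
      have habs1 : |Real.log (c * ε)| = |Real.log c| + |Real.log ε| := by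
        rw [hlm, abs_of_neg (by linarith), abs_of_neg hlogc, abs_of_neg hlogε]
        ring
      rw [habs1, add_div, div_self (abs_ne_zero.mpr hlogε.ne)]
    have h0 : Tendsto (fun ε : ℝ => |Real.log c| / |Real.log ε| + 1)
        (𝓝[>] (0 : ℝ)) (𝓝 1) := by
      have := (tendsto_const_nhds (x := |Real.log c|)).div_atTop habs
      have h1 := this.add (tendsto_const_nhds (x := (1 : ℝ)))
      rw [zero_add] at h1
      exact h1
    exact Tendsto.congr' hev h0
  have hvlim : Tendsto v (𝓝[>] (0 : ℝ)) (𝓝 1) := by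
    have := (ENNReal.continuous_ofReal.tendsto (1 : ℝ)).comp hrtend
    rwa [ENNReal.ofReal_one] at this
  have hvsup : limsup v (𝓝[>] (0 : ℝ)) = 1 := hvlim.limsup_eq
  have hucomp : u = (fun ε : ℝ => ENNReal.ofReal (Real.log (maxSep X ε : ℝ) / |Real.log ε|))
      ∘ (fun ε : ℝ => c * ε) := rfl
  have husup : limsup u (𝓝[>] (0 : ℝ)) = boxUpper X := by
    rw [hucomp, limsup_comp, map_mul_nhdsWithin hc0, boxUpper]
  have huinf : liminf u (𝓝[>] (0 : ℝ)) = boxLower X := by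
    rw [hucomp, liminf_comp, map_mul_nhdsWithin hc0, boxLower]
  have hev : ∀ᶠ ε : ℝ in 𝓝[>] (0 : ℝ),
      ENNReal.ofReal (Real.log (maxSep X (c * ε) : ℝ)) / ENNReal.ofReal |Real.log ε|
        = (u * v) ε := by
    filter_upwards [Ioo_mem_nhdsGT_of_mem
      (Set.left_mem_Ico.mpr (zero_lt_one (α := ℝ)))] with ε hε
    obtain ⟨hε0, hε1⟩ := hε
    have hcε0 : 0 < c * ε := mul_pos hc0 hε0
    have hcε1 : c * ε < 1 := by nlinarith
    have hlogε : 0 < |Real.log ε| := abs_pos.mpr (Real.log_neg hε0 hε1).ne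
    have hlogcε : 0 < |Real.log (c * ε)| := abs_pos.mpr (Real.log_neg hcε0 hcε1).ne
    have hN : (1 : ℝ) ≤ (maxSep X (c * ε) : ℝ) := by exact_mod_cast one_le_maxSep hcε0
    have hlogN : 0 ≤ Real.log (maxSep X (c * ε) : ℝ) := Real.log_nonneg hN
    have hsplit : Real.log (maxSep X (c * ε) : ℝ) / |Real.log ε|
        = (Real.log (maxSep X (c * ε) : ℝ) / |Real.log (c * ε)|)
          * (|Real.log (c * ε)| / |Real.log ε|) := by
      field_simp
    calc ENNReal.ofReal (Real.log (maxSep X (c * ε) : ℝ)) / ENNReal.ofReal |Real.log ε|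
        = ENNReal.ofReal (Real.log (maxSep X (c * ε) : ℝ) / |Real.log ε|) :=
          (ENNReal.ofReal_div_of_pos hlogε).symm
      _ = ENNReal.ofReal ((Real.log (maxSep X (c * ε) : ℝ) / |Real.log (c * ε)|)
          * (|Real.log (c * ε)| / |Real.log ε|)) := by rw [← hsplit]
      _ = u ε * v ε := ENNReal.ofReal_mul (div_nonneg hlogN hlogcε.le)
  constructor
  · calc limsup (fun ε : ℝ => ENNReal.ofReal (Real.log (maxSep X (c * ε) : ℝ))
        / ENNReal.ofReal |Real.log ε|) (𝓝[>] (0 : ℝ))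
        = limsup (u * v) (𝓝[>] (0 : ℝ)) := limsup_congr hev
      _ ≤ limsup u (𝓝[>] (0 : ℝ)) * limsup v (𝓝[>] (0 : ℝ)) :=
          ENNReal.limsup_mul_le' (Or.inr (by simp [hvsup])) (Or.inr (by simp [hvsup]))
      _ = boxUpper X := by rw [hvsup, husup, mul_one]
  · have hev' : ∀ᶠ ε : ℝ in 𝓝[>] (0 : ℝ),
        ENNReal.ofReal (Real.log (maxSep X (c * ε) : ℝ)) / ENNReal.ofReal |Real.log ε|
          = (v * u) ε := by
      filter_upwards [hev] with ε h
      rw [h]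
      simp [mul_comm]
    calc liminf (fun ε : ℝ => ENNReal.ofReal (Real.log (maxSep X (c * ε) : ℝ))
        / ENNReal.ofReal |Real.log ε|) (𝓝[>] (0 : ℝ))
        = liminf (v * u) (𝓝[>] (0 : ℝ)) := liminf_congr hev'
      _ ≤ limsup v (𝓝[>] (0 : ℝ)) * liminf u (𝓝[>] (0 : ℝ)) :=
          ENNReal.liminf_mul_le (Or.inl (by simp [hvsup])) (Or.inl (by simp [hvsup]))
      _ = boxLower X := by rw [hvsup, huinf, one_mul]

end Aux

/-- the metric mean dimension of the shift on `(X^G, 𝒅)` is bounded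
above by the corresponding box dimension of `(X,d)`. -/
theorem mdimM_shift_le_box {G X : Type*} [Group G] [Countable G]
    [MetricSpace X] [CompactSpace X]
    (α : G → ℝ) (hαpos : ∀ g, 0 < α g) (hα1 : α (1 : G) = 1) (hsum : Summable α)
    (Fs : ℕ → Finset G) (hFol : IsFolner Fs) :
    mdimMUpper shift (bigD α) Fs (Set.univ : Set (G → X)) ≤ boxUpper X ∧
    mdimMLower shift (bigD α) Fs (Set.univ : Set (G → X)) ≤ boxLower X := by
  obtain hX | hX := isEmpty_or_nonempty X
  · have hGX : IsEmpty (G → X) := ⟨fun x => hX.false (x 1)⟩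
    have h0 : ∀ (F' : Finset G) (ε : ℝ),
        spanNum shift (bigD α) F' ε (Set.univ : Set (G → X)) = 0 := by
      intro F' ε
      exact Nat.sInf_eq_zero.mpr (Or.inl ⟨∅, ⟨by simp, fun x _ => (hGX.false x).elim⟩, rfl⟩)
    have hconst : (fun ε : ℝ => (limsup (fun n => ENNReal.ofReal
        (Real.log (spanNum shift (bigD α) (Fs n) ε (Set.univ : Set (G → X)) : ℝ)
          / ((Fs n).card : ℝ))) atTop) / ENNReal.ofReal |Real.log ε|)
        = fun _ : ℝ => (0 : ℝ≥0∞) := by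
      funext ε
      simp [h0]
    constructor
    · unfold mdimMUpper
      rw [hconst, limsup_const]
      exact zero_le
    · unfold mdimMLower
      rw [hconst, liminf_const]
      exact zero_le
  · set S := ∑' g, α g with hSdef
    have hS1 : (1 : ℝ) ≤ S := by
      have h := Summable.sum_le_tsum ({1} : Finset G) (fun g _ => (hαpos g).le) hsum
      rwa [Finset.sum_singleton, hα1] at h
    set c : ℝ := (2 * S)⁻¹ with hcdef
    have hc0 : 0 < c := inv_pos.mpr (by linarith)
    have hc1 : c < 1 := by
      rw [hcdef]
      exact inv_lt_one_of_one_lt₀ (by linarith)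
    have hscaled := scaled_le_box (X := X) hc0 hc1
    have hev : ∀ᶠ ε : ℝ in 𝓝[>] (0 : ℝ),
        (limsup (fun n => ENNReal.ofReal
          (Real.log (spanNum shift (bigD α) (Fs n) ε (Set.univ : Set (G → X)) : ℝ)
            / ((Fs n).card : ℝ))) atTop) / ENNReal.ofReal |Real.log ε|
        ≤ ENNReal.ofReal (Real.log (maxSep X (c * ε) : ℝ)) / ENNReal.ofReal |Real.log ε| := by
      filter_upwards [self_mem_nhdsWithin] with ε hε
      have hε0 : (0 : ℝ) < ε := hε
      have hd := limsup_span_le (X := X) α hαpos hα1 hsum hFol hε0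
      have hrw : ε / (2 * S) = c * ε := by
        rw [hcdef, div_eq_mul_inv, mul_comm]
      rw [hrw] at hd
      exact ENNReal.div_le_div_right hd _
    constructor
    · unfold mdimMUpper
      exact (limsup_le_limsup hev).trans hscaled.1
    · unfold mdimMLower
      exact (liminf_le_liminf hev).trans hscaled.2

end MeanDim11
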